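/- For any monoid G acting on a set X and any Hausdorff G-topology τ on X, the Zariski G-topology ζ_G is contained in τ, i.e., every ζ_G-open set is τ-open. -/

import Mathlib

open Topology

/-- The Zariski `G`-topology on a `G`-act `X`: the topology generated by the subbase
consisting of the sets `{x | f • x ≠ g • x}` for `f g : G` and the sets
`{x | f • x ≠ c}` for `f : G`, `c : X`. -/
def zariskiGTopology (G X : Type*) [Monoid G] [MulAction G X] : TopologicalSpace X :=
  TopologicalSpace.generateFrom
    ({S : Set X | ∃ f g : G, S = {x : X | f • x ≠ g • x}} ∪
     {S : Set X | ∃ (f : G) (c : X), S = {x : X | f • x ≠ c}})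

/-- For any monoid `G` acting on a set `X` and any Hausdorff `G`-topology `τ` on `X`
(i.e. a Hausdorff topology making all the maps `x ↦ g • x` continuous), the Zariski
`G`-topology is contained in `τ`: every Zariski-open set is `τ`-open. -/
theorem zariskiGTopology_le_of_hausdorff_GTopology (G X : Type*) [Monoid G] [MulAction G X]
    (τ : TopologicalSpace X) (hT2 : @T2Space X τ)
    (hcont : ∀ g : G, Continuous[τ, τ] fun x => g • x) :
    ∀ U : Set X, IsOpen[zariskiGTopology G X] U → IsOpen[τ] U := by
  intro U hU
  induction hU with
  | basic S hS =>
      rcases hS with ⟨f, g, rfl⟩ | ⟨f, c, rfl⟩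
      · have : {x : X | f • x ≠ g • x} =
            (fun x => ((f • x : X), (g • x : X))) ⁻¹' (Set.diagonal X)ᶜ := by
          ext x; simp [Set.diagonal, eq_comm]
        rw [this]
        exact ((hcont f).prodMk (hcont g)).isOpen_preimage _
          (@isClosed_diagonal X τ hT2).isOpen_compl
      · have : {x : X | f • x ≠ c} = (fun x => (f • x : X)) ⁻¹' ({c}ᶜ) := by
          ext x; simp
        rw [this]
        exact (hcont f).isOpen_preimage _ (@isClosed_singleton X τ _ c).isOpen_compl
  | univ => exact isOpen_univ
  | inter _ _ _ _ h1 h2 => exact h1.inter h2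
  | sUnion _ _ ih => exact isOpen_sUnion ih
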